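/- Let m ≥ 2 and let C be the m×m matrix with first row (n₁, 2(n₁-1), 2(n₁-1), ..., 2(n₁-1)) and, for 2 ≤ i ≤ m, i-th row having first entry nᵢ, diagonal entry 2, and all other entries nᵢ. Then det C = (-1)^{m-1} · Σ_{i=1}^m ( nᵢ · Π_{j≠i} (nⱼ - 2) ). -/

import Mathlib

open Finset

theorem aux0 (m : ℕ) (d a : Fin m → ℝ) (M : Matrix (Fin m) (Fin m) ℝ)
    (hM : ∀ i j, M i j = (if j = i then d i else 0) + a i) :
    M.det = (∏ i, d i) + ∑ i, a i * ∏ j ∈ Finset.univ.erase i, d j := by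
  classical
  set F := (Matrix.detRowAlternating : (Fin m → ℝ) [⋀^Fin m]→ₗ[ℝ] ℝ).toMultilinearMap with hF
  set g : Fin m → Fin m → ℝ := fun i _ => a i with hg
  set h : Fin m → Fin m → ℝ := fun i j => if j = i then d i else 0 with hh
  have hM' : (M : Fin m → Fin m → ℝ) = g + h := by
    funext i j
    simpa [g, h] using (hM i j).trans (add_comm _ _)
  have key : ∀ S : Finset (Fin m),
      F (S.piecewise g h)
        = (∏ i, (if i ∈ S then a i else d i)) * (if S.card ≤ 1 then 1 else 0) := by
    intro S
    set V : Matrix (Fin m) (Fin m) ℝ :=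
      Matrix.of (fun i j => if i ∈ S then (1:ℝ) else if j = i then 1 else 0) with hV
    have hpw : S.piecewise g h = fun i => (if i ∈ S then a i else d i) • V i := by
      funext i j
      by_cases hi : i ∈ S <;> simp [Finset.piecewise, hi, g, h, V]
    have hdetV : V.det = if S.card ≤ 1 then 1 else 0 := by
      by_cases hc : S.card ≤ 1
      · rw [if_pos hc]
        rcases Nat.le_one_iff_eq_zero_or_eq_one.mp hc with h0 | h1
        · have hS : S = ∅ := Finset.card_eq_zero.mp h0
          subst hS
          have : V = 1 := by
            funext i j
            simp [V, Matrix.one_apply, eq_comm]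
          rw [this, Matrix.det_one]
        · obtain ⟨k, hk⟩ := Finset.card_eq_one.mp h1
          subst hk
          have hVe : V = (1 : Matrix (Fin m) (Fin m) ℝ).updateRow k (fun _ => 1) := by
            funext i j
            by_cases hik : i = k
            · subst hik; simp [V]
            · simp [V, hik, (Ne.symm hik : k ≠ i), Matrix.updateRow_ne hik, Matrix.one_apply, eq_comm]
          have hone : (fun _ => (1:ℝ)) = ∑ l, ((fun _ => (1:ℝ)) l) • (1 : Matrix (Fin m) (Fin m) ℝ) l := by
            funext j
            rw [Finset.sum_apply]
            simp [Matrix.one_apply]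
          rw [hVe, hone, Matrix.det_updateRow_sum]
          simp
      · rw [if_neg hc]
        push_neg at hc
        obtain ⟨i, hi, j, hj, hij⟩ := Finset.one_lt_card.mp hc
        refine Matrix.det_zero_of_row_eq hij ?_
        funext k
        simp [V, hi, hj]
    have hFV : F V = V.det := rfl
    rw [hpw]; erw [F.map_smul_univ]; rw [hFV, hdetV, smul_eq_mul]
  have hdet : M.det = F (g + h) := by
    rw [← hM']; rfl
  rw [hdet, F.map_add_univ]
  have hsplit : ∀ S : Finset (Fin m), F (S.piecewise g h) =
      if S.card ≤ 1 then (∏ i, (if i ∈ S then a i else d i)) else 0 := by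
    intro S
    rw [key S]
    split_ifs <;> ring
  set T : Finset (Finset (Fin m)) :=
    insert (∅ : Finset (Fin m)) (Finset.univ.image fun i => ({i} : Finset (Fin m))) with hT
  have hsub : ∑ S ∈ T, F (S.piecewise g h) = ∑ S : Finset (Fin m), F (S.piecewise g h) := by
    refine Finset.sum_subset (Finset.subset_univ T) ?_
    intro S _ hS
    rw [hsplit S, if_neg]
    intro hc
    rcases Nat.le_one_iff_eq_zero_or_eq_one.mp hc with h0 | h1
    · exact hS (by simp [T, Finset.card_eq_zero.mp h0])
    · obtain ⟨k, hk⟩ := Finset.card_eq_one.mp h1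
      exact hS (by simp [T, hk])
  rw [← hsub]
  have hempty : (∅ : Finset (Fin m)) ∉ Finset.univ.image fun i => ({i} : Finset (Fin m)) := by
    simp only [Finset.mem_image, Finset.mem_univ, true_and, not_exists]
    exact fun x h => Finset.singleton_ne_empty x h
  rw [hT, Finset.sum_insert hempty,
    Finset.sum_image (fun i _ j _ hij => Finset.singleton_injective hij)]
  congr 1
  · rw [hsplit]; simp
  · refine Finset.sum_congr rfl ?_
    intro i _
    rw [hsplit]
    simp only [Finset.card_singleton, le_refl, if_pos, Finset.mem_singleton]
    rw [← Finset.mul_prod_erase _ _ (Finset.mem_univ i), if_pos rfl]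
    congr 1
    refine Finset.prod_congr rfl ?_
    intro j hj
    rw [if_neg (Finset.ne_of_mem_erase hj)]

theorem stmt0 (m : ℕ) (hm : 2 ≤ m) (n : Fin m → ℝ)
    (C : Matrix (Fin m) (Fin m) ℝ)
    (hC : ∀ i j : Fin m,
      C i j = if j = (⟨0, by omega⟩ : Fin m) then n i
              else if i = (⟨0, by omega⟩ : Fin m) then 2 * (n i - 1)
              else if j = i then 2 else n i) :
    C.det = (-1 : ℝ) ^ (m - 1) *
      ∑ i : Fin m, n i * ∏ j ∈ Finset.univ.erase i, (n j - 2) := by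
  classical
  set z : Fin m := ⟨0, by omega⟩ with hz
  set d : Fin m → ℝ := fun i => 2 - n i with hd
  set a : Fin m → ℝ := fun i => if i = z then 2 * (n i - 1) else n i with ha
  have hC' : ∀ i j, C i j = (if j = i then d i else 0) + a i := by
    intro i j
    rw [hC i j]
    by_cases hj0 : j = z
    · subst hj0
      by_cases hi0 : i = z
      · subst hi0
        simp [d, a]; ring
      · rw [if_pos rfl, if_neg (fun hzi => hi0 hzi.symm)]
        simp [a, hi0]
    · by_cases hi0 : i = z
      · subst hi0
        rw [if_neg hj0, if_pos rfl, if_neg hj0]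
        simp [a]
      · rw [if_neg hj0, if_neg hi0]
        by_cases hji : j = i
        · rw [if_pos hji, if_pos hji]
          simp [a, hi0, d]
        · rw [if_neg hji, if_neg hji]
          simp [a, hi0]
  rw [aux0 m d a C hC']
  -- sign manipulation
  set P : Fin m → ℝ := fun i => ∏ j ∈ Finset.univ.erase i, (n j - 2) with hP
  have hcard : ∀ i : Fin m, (Finset.univ.erase i).card = m - 1 := by
    intro i
    rw [Finset.card_erase_of_mem (Finset.mem_univ i), Finset.card_univ, Fintype.card_fin]
  have h1 : ∀ i : Fin m, ∏ j ∈ Finset.univ.erase i, d j = (-1:ℝ)^(m-1) * P i := by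
    intro i
    calc ∏ j ∈ Finset.univ.erase i, d j
        = ∏ j ∈ Finset.univ.erase i, (-1) * (n j - 2) := by
          refine Finset.prod_congr rfl fun j _ => ?_; simp only [hd]; ring
      _ = (-1:ℝ)^(m-1) * P i := by
          rw [Finset.prod_mul_distrib, Finset.prod_const, hcard i]
  have h2 : ∏ i, d i = (-1:ℝ)^m * ∏ i, (n i - 2) := by
    calc ∏ i, d i = ∏ i : Fin m, (-1) * (n i - 2) := by
          refine Finset.prod_congr rfl fun j _ => ?_; simp only [hd]; ring
      _ = (-1:ℝ)^m * ∏ i, (n i - 2) := by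
          rw [Finset.prod_mul_distrib, Finset.prod_const, Finset.card_univ, Fintype.card_fin]
  rw [h2]
  have hQ : ∏ i, (n i - 2) = (n z - 2) * P z := (Finset.mul_prod_erase _ _ (Finset.mem_univ z)).symm
  have hsum1 : ∑ i, a i * ∏ j ∈ Finset.univ.erase i, d j
      = a z * ((-1:ℝ)^(m-1) * P z) + ∑ i ∈ Finset.univ.erase z, n i * ((-1:ℝ)^(m-1) * P i) := by
    rw [← Finset.add_sum_erase _ _ (Finset.mem_univ z)]
    congr 1
    · rw [h1]
    · refine Finset.sum_congr rfl fun i hi => ?_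
      rw [h1, ha]
      simp [Finset.ne_of_mem_erase hi]
  have hsum2 : ∑ i : Fin m, n i * P i
      = n z * P z + ∑ i ∈ Finset.univ.erase z, n i * P i := by
    rw [← Finset.add_sum_erase _ _ (Finset.mem_univ z)]
  have hpow : (-1:ℝ)^m = (-1:ℝ)^(m-1) * (-1) := by
    have hm1 : m - 1 + 1 = m := by omega
    conv_lhs => rw [← hm1]
    rw [pow_succ]
  have hms : ∑ i ∈ Finset.univ.erase z, n i * ((-1:ℝ)^(m-1) * P i)
      = (-1:ℝ)^(m-1) * ∑ i ∈ Finset.univ.erase z, n i * P i := by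
    rw [Finset.mul_sum]
    exact Finset.sum_congr rfl fun i _ => by ring
  rw [hsum1, hsum2, hQ, hpow, hms, ha]
  simp only [eq_self_iff_true, if_true, if_pos]
  ring
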